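/- Let ℓ ≥ 3, let j be an integer with 1 ≤ j ≤ ℓ−1, and set ω = exp(2πi·j/ℓ) ∈ ℂ; assume ω ≠ −1. Then there exists a constant C > 0 such that for all n ≥ 1, |Σ_{m=0}^{n} a(n,m)·ω^m| ≤ C·n^{−3/2}·2^n. -/

import Mathlib

open Filter Real

/-- `aa n m` = number of length-`n` paths on `ℤ≥0` with steps `±1` starting at `0`
and ending at `m`. -/
def aa : ℕ → ℕ → ℕ
  | 0, m => if m = 0 then 1 else 0
  | n+1, m => aa n (m+1) + (if m = 0 then 0 else aa n (m-1))

/-- `aSum n = Σ_{m=0}^n aa n m`. -/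
def aSum (n : ℕ) : ℕ := ∑ m ∈ Finset.range (n+1), aa n m

/-- The modular variant `b(n,m)` depending on `ℓ`:
`b(n,m) = a(n,m)` if `m ≡ ℓ-1 (mod ℓ)`; otherwise `b(0,m) = δ_{m,0}`, and for `n ≥ 1`,
`b(n,m) = b(n-1,m-1) + b(n-1,m+1)` if `m % ℓ < ℓ-2` (negative-index terms are `0`),
and `b(n,m) = b(n-1,m-1)` if `m ≡ ℓ-2 (mod ℓ)`. -/
def bb (ℓ : ℕ) : ℕ → ℕ → ℕ
  | 0, m => if m % ℓ = ℓ - 1 then aa 0 m else if m = 0 then 1 else 0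
  | n+1, m =>
    if m % ℓ = ℓ - 1 then aa (n+1) m
    else if m % ℓ = ℓ - 2 then (if m = 0 then 0 else bb ℓ n (m-1))
    else (if m = 0 then 0 else bb ℓ n (m-1)) + bb ℓ n (m+1)

/-- `bSum ℓ n = Σ_{m=0}^n bb ℓ n m`. -/
def bSum (ℓ : ℕ) (n : ℕ) : ℕ := ∑ m ∈ Finset.range (n+1), bb ℓ n m

/-- `cc ℓ n r = Σ_{m ≥ 0, m ≡ r (mod ℓ)} aa n m` (finite since `aa n m = 0` for `m > n`). -/
def cc (ℓ : ℕ) (n r : ℕ) : ℕ :=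
  ∑ m ∈ Finset.range (n+1), if m % ℓ = r then aa n m else 0

/-- `ww ℓ n = Σ_{0 ≤ m ≤ n, m ≡ ℓ-1 (mod ℓ)} bb ℓ n m`. -/
def ww (ℓ : ℕ) (n : ℕ) : ℕ :=
  ∑ m ∈ Finset.range (n+1), if m % ℓ = ℓ - 1 then bb ℓ n m else 0

lemma aa_eq_zero : ∀ n m, n < m → aa n m = 0 := by
  intro n
  induction n with
  | zero => intro m h; simp only [aa]; rw [if_neg (by omega)]
  | succ n ih =>
    intro m h
    match m, h with
    | m+1, h =>
      simp only [aa, if_neg (Nat.succ_ne_zero m), Nat.add_sub_cancel]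
      rw [ih (m+2) (by omega), ih m (by omega)]

lemma aa_closed : ∀ n m, (aa n m : ℤ) =
    if (n + m) % 2 = 0 then (n.choose ((n+m)/2) : ℤ) - n.choose ((n+m)/2 + 1) else 0 := by
  intro n
  induction n with
  | zero =>
    intro m
    rcases m with _ | m
    · simp [aa]
    · simp only [aa, if_neg (Nat.succ_ne_zero m), Nat.zero_add]
      by_cases h : (m+1) % 2 = 0
      · rw [if_pos h]
        rw [Nat.choose_eq_zero_of_lt (by omega), Nat.choose_eq_zero_of_lt (by omega)]
        simp
      · rw [if_neg h]; simp
  | succ n ih =>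
    intro m
    rcases m with _ | m
    · -- aa (n+1) 0 = aa n 1
      show ((aa n 1 + 0 : ℕ) : ℤ) = _
      push_cast [ih 1]
      by_cases h : (n + 1) % 2 = 0
      · rw [if_pos h, if_pos (by omega)]
        obtain ⟨t, ht⟩ : ∃ t, n + 1 = 2 * t := ⟨(n+1)/2, by omega⟩
        have ht1 : 1 ≤ t := by omega
        have h1 : (n+1)/2 = t := by omega
        have h2 : (n+1+0)/2 = t := by omega
        rw [h1]
        have key : n.choose (t-1) = n.choose t := by
          have h3 := Nat.choose_symm (show t-1 ≤ n by omega)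
          rw [show n-(t-1) = t by omega] at h3
          exact h3.symm
        have p1 : ((n+1).choose t : ℤ) = n.choose (t-1) + n.choose t := by
          obtain ⟨u, hu⟩ : ∃ u, t = u + 1 := ⟨t-1, by omega⟩
          subst hu
          rw [Nat.choose_succ_succ]; push_cast; simp
        have p2 : ((n+1).choose (t+1) : ℤ) = n.choose t + n.choose (t+1) := by
          rw [Nat.choose_succ_succ]; push_cast; ring
        rw [p1, p2, key]; ring
      · rw [if_neg h, if_neg (by omega)]; simp
    · show ((aa n (m+2) + aa n m : ℕ) : ℤ) = _
      push_cast [ih (m+2), ih m]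
      by_cases h : (n + 1 + (m+1)) % 2 = 0
      · obtain ⟨s, hs⟩ : ∃ s, (n + m + 2) = 2 * (s+1) := ⟨(n+m)/2, by omega⟩
        rw [if_pos (by omega), if_pos (by omega), if_pos (by omega)]
        have e1 : (n + (m+2))/2 = s + 1 := by omega
        have e2 : (n + m)/2 = s := by omega
        have e3 : (n + 1 + (m+1))/2 = s + 1 := by omega
        rw [e1, e2, e3]
        have p1 : ((n+1).choose (s+1) : ℤ) = n.choose s + n.choose (s+1) := by
          rw [Nat.choose_succ_succ]; push_cast; ring
        have p2 : ((n+1).choose (s+2) : ℤ) = n.choose (s+1) + n.choose (s+2) := by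
          rw [Nat.choose_succ_succ]; push_cast; ring
        rw [p1, p2]; ring
      · rw [if_neg (by omega), if_neg (by omega), if_neg (by omega)]; simp

lemma cb_sq : ∀ m, (Nat.centralBinom m)^2 * (m+1) ≤ 16^m := by
  intro m
  induction m with
  | zero => simp [Nat.centralBinom]
  | succ m ih =>
    have key := Nat.succ_mul_centralBinom_succ m
    have h1 : (2*m+1)^2 * (m+2) ≤ 4 * (m+1)^3 := by nlinarith
    refine Nat.le_of_mul_le_mul_left ?_ (show 0 < (m+1)^2 by positivity)
    calc (m+1)^2 * ((Nat.centralBinom (m+1))^2 * (m+2))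
        = ((m+1) * Nat.centralBinom (m+1))^2 * (m+2) := by ring
      _ = (2 * (2*m+1) * Nat.centralBinom m)^2 * (m+2) := by rw [key]
      _ = 4 * ((2*m+1)^2 * (m+2)) * (Nat.centralBinom m)^2 := by ring
      _ ≤ 4 * (4 * (m+1)^3) * (Nat.centralBinom m)^2 := by
          exact Nat.mul_le_mul_right _ (Nat.mul_le_mul_left _ h1)
      _ = 16 * (m+1)^2 * ((Nat.centralBinom m)^2 * (m+1)) := by ring
      _ ≤ 16 * (m+1)^2 * 16^m := Nat.mul_le_mul_left _ ih
      _ = (m+1)^2 * 16^(m+1) := by ring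

lemma aa_n0_mul : ∀ k, aa (2*k) 0 * (k+1) = Nat.centralBinom k := by
  intro k
  have h := aa_closed (2*k) 0
  rw [if_pos (by omega)] at h
  have e : (2*k + 0)/2 = k := by omega
  rw [e] at h
  have hc := Nat.choose_succ_right_eq (2*k) k
  have hle : (2*k).choose (k+1) ≤ (2*k).choose k := by
    have := Nat.choose_le_middle (k+1) (2*k)
    rwa [show 2*k/2 = k by omega] at this
  have : (aa (2*k) 0 * (k+1) : ℤ) = Nat.centralBinom k := by
    rw [Nat.centralBinom]
    push_cast [h]
    have hc' : ((2*k).choose (k+1) : ℤ) * (k+1) = (2*k).choose k * k := by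
      exact_mod_cast (by rw [hc]; congr 1; omega : (2*k).choose (k+1) * (k+1) = (2*k).choose k * k)
    ring_nf
    ring_nf at hc'
    linarith
  exact_mod_cast this

lemma aa_n0_odd : ∀ n, n % 2 = 1 → aa n 0 = 0 := by
  intro n hn
  have h := aa_closed n 0
  rw [if_neg (by omega)] at h
  exact_mod_cast h

lemma aa_n0_sq : ∀ n, (aa n 0)^2 * (n+1)^3 ≤ 8 * 4^n := by
  intro n
  rcases Nat.even_or_odd n with ⟨k, hk⟩ | hodd
  · have hk2 : n = 2*k := by omega
    subst hk2
    have h1 := aa_n0_mul k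
    have h2 := cb_sq k
    have h3 : (aa (2*k) 0)^2 * (k+1)^3 ≤ 16^k := by
      calc (aa (2*k) 0)^2 * (k+1)^3 = (aa (2*k) 0 * (k+1))^2 * (k+1) := by ring
        _ = (Nat.centralBinom k)^2 * (k+1) := by rw [h1]
        _ ≤ 16^k := h2
    calc (aa (2*k) 0)^2 * (2*k+1)^3 ≤ (aa (2*k) 0)^2 * (8 * (k+1)^3) := by
          refine Nat.mul_le_mul_left _ ?_; nlinarith
      _ = 8 * ((aa (2*k) 0)^2 * (k+1)^3) := by ring
      _ ≤ 8 * 16^k := Nat.mul_le_mul_left _ h3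
      _ = 8 * 4^(2*k) := by rw [pow_mul]; norm_num
  · obtain ⟨k, hk⟩ := hodd
    rw [aa_n0_odd n (by omega : n % 2 = 1)]
    simp

lemma aa_n0_real (n : ℕ) : (aa n 0 : ℝ) ≤ 3 * 2^n / Real.sqrt ((n+1:ℝ)^3) := by
  have hs : (0:ℝ) < Real.sqrt ((n+1:ℝ)^3) := Real.sqrt_pos.mpr (by positivity)
  rw [le_div_iff₀ hs]
  have hsq : ((aa n 0 : ℝ) * Real.sqrt ((n+1:ℝ)^3))^2 ≤ (3 * 2^n)^2 := by
    have : ((aa n 0 : ℝ) * Real.sqrt ((n+1:ℝ)^3))^2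
        = (aa n 0 : ℝ)^2 * ((n+1:ℝ)^3) := by
      rw [mul_pow, Real.sq_sqrt (by positivity)]
    rw [this]
    have h := aa_n0_sq n
    have h' : ((aa n 0)^2 * (n+1)^3 : ℝ) ≤ 8 * 4^n := by exact_mod_cast h
    have h4 : ((2:ℝ)^n)^2 = 4^n := by
      rw [← pow_mul, mul_comm, pow_mul]; norm_num
    nlinarith [h', h4, pow_pos (show (0:ℝ) < 4 by norm_num) n]
  have h0 : (0:ℝ) ≤ (aa n 0 : ℝ) * Real.sqrt ((n+1:ℝ)^3) := by positivity
  calc (aa n 0 : ℝ) * Real.sqrt ((n+1:ℝ)^3)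
      = Real.sqrt (((aa n 0 : ℝ) * Real.sqrt ((n+1:ℝ)^3))^2) := (Real.sqrt_sq h0).symm
    _ ≤ Real.sqrt ((3 * 2^n)^2) := Real.sqrt_le_sqrt hsq
    _ = 3 * 2^n := Real.sqrt_sq (by positivity)

noncomputable def Sfun (ω : ℂ) (n : ℕ) : ℂ := ∑ m ∈ Finset.range (n+1), (aa n m : ℂ) * ω^m

lemma Sfun_ext (ω : ℂ) (n N : ℕ) (h : n+1 ≤ N) :
    ∑ m ∈ Finset.range N, (aa n m : ℂ) * ω^m = Sfun ω n := by
  rw [Sfun]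
  symm
  apply Finset.sum_subset (Finset.range_subset_range.mpr h)
  intro x _ hx
  rw [aa_eq_zero n x (by simp at hx ⊢; omega)]
  simp

lemma Sfun_rec (ω : ℂ) (hω0 : ω ≠ 0) (n : ℕ) :
    Sfun ω (n+1) = (ω + ω⁻¹) * Sfun ω n - ω⁻¹ * (aa n 0 : ℂ) := by
  have key : ω * Sfun ω (n+1) = ω * ((ω + ω⁻¹) * Sfun ω n - ω⁻¹ * (aa n 0 : ℂ)) := by
    have expand : ω * Sfun ω (n+1)
        = ∑ m ∈ Finset.range (n+2), (aa n (m+1) : ℂ) * ω^(m+1)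
          + ω^2 * ∑ m ∈ Finset.range (n+2), (if m = 0 then 0 else (aa n (m-1) : ℂ)) * ω^(m-1) := by
      rw [Sfun, Finset.mul_sum, Finset.mul_sum, ← Finset.sum_add_distrib]
      apply Finset.sum_congr rfl
      intro m _
      have : aa (n+1) m = aa n (m+1) + (if m = 0 then 0 else aa n (m-1)) := by rw [aa]
      rw [this]
      rcases m with _ | m
      · push_cast; ring
      · push_cast [if_neg (Nat.succ_ne_zero m), Nat.add_sub_cancel]
        ring
    have first : ∑ m ∈ Finset.range (n+2), (aa n (m+1) : ℂ) * ω^(m+1)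
        = Sfun ω n - (aa n 0 : ℂ) := by
      have := Finset.sum_range_succ' (fun m => (aa n m : ℂ) * ω^m) (n+2)
      rw [Sfun_ext ω n (n+3) (by omega)] at this
      simp only [pow_zero, mul_one] at this
      rw [this]; ring
    have second : ∑ m ∈ Finset.range (n+2), (if m = 0 then 0 else (aa n (m-1) : ℂ)) * ω^(m-1)
        = Sfun ω n := by
      have h2 := Finset.sum_range_succ' (fun m => (if m = 0 then 0 else (aa n (m-1) : ℂ)) * ω^(m-1)) (n+1)
      rw [h2, Sfun]
      simp
    rw [expand, first, second]
    field_simp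
    ring
  exact mul_left_cancel₀ hω0 key

set_option maxHeartbeats 1000000 in
lemma master (ω : ℂ) (hω1 : ‖ω‖ = 1) (hq2 : ‖ω + ω⁻¹‖ < 2) :
    ∃ C : ℝ, 0 < C ∧ ∀ n : ℕ,
      ‖Sfun ω n‖ * Real.sqrt ((n+1:ℝ)^3) ≤ C * 2^n := by
  set q : ℝ := ‖ω + ω⁻¹‖ with hq
  have hq0 : 0 ≤ q := norm_nonneg _
  have h2q : (0:ℝ) < 2 - q := by linarith
  have hω0 : ω ≠ 0 := by intro h; rw [h] at hω1; simp at hω1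
  set h : ℕ → ℝ := fun n => Real.sqrt ((n+1:ℝ)^3) with hh
  have hpos : ∀ n : ℕ, 0 < h n := fun n => Real.sqrt_pos.mpr (by positivity)
  set N : ℕ := ⌈12/(2-q)⌉₊ with hN
  have hNval : 12/(2-q) ≤ (N:ℝ) := Nat.le_ceil _
  set D : ℝ := ∑ k ∈ Finset.range (N+1), ‖Sfun ω k‖ * h k / 2^k with hD
  set C : ℝ := max (24/(2-q)) D + 1 with hC
  have hCpos : 0 < C := by
    have : 0 ≤ D := Finset.sum_nonneg (fun k _ => by positivity)
    have h24 : 0 ≤ 24/(2-q) := by positivity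
    rw [hC]; nlinarith [le_max_left (24/(2-q)) D]
  have hbase : ∀ k, k ≤ N → ‖Sfun ω k‖ * h k ≤ C * 2^k := by
    intro k hk
    have hmem : k ∈ Finset.range (N+1) := Finset.mem_range.mpr (by omega)
    have h1 : ‖Sfun ω k‖ * h k / 2^k ≤ D :=
      Finset.single_le_sum (f := fun k => ‖Sfun ω k‖ * h k / 2^k)
        (fun i _ => by positivity) hmem
    have h2 : D ≤ C := by rw [hC]; nlinarith [le_max_right (24/(2-q)) D]
    have h2k : (0:ℝ) < 2^k := by positivity
    rw [div_le_iff₀ h2k] at h1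
    nlinarith
  have hratio : ∀ n : ℕ, ((n:ℝ)+1) * h (n+1) ≤ ((n:ℝ)+4) * h n := by
    intro n
    have e1 : (((n:ℝ)+1) * h (n+1))^2 = ((n:ℝ)+1)^2 * ((n:ℝ)+2)^3 := by
      rw [hh, mul_pow, Real.sq_sqrt (by positivity)]; push_cast; ring
    have e2 : (((n:ℝ)+4) * h n)^2 = ((n:ℝ)+4)^2 * ((n:ℝ)+1)^3 := by
      rw [hh, mul_pow, Real.sq_sqrt (by positivity)]
    have hineq : (((n:ℝ)+1) * h (n+1))^2 ≤ (((n:ℝ)+4) * h n)^2 := by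
      rw [e1, e2]; nlinarith [sq_nonneg ((n:ℝ)), (show (0:ℝ) ≤ n by positivity)]
    have h0 : (0:ℝ) ≤ ((n:ℝ)+1) * h (n+1) := by positivity
    calc ((n:ℝ)+1) * h (n+1) = Real.sqrt ((((n:ℝ)+1) * h (n+1))^2) := (Real.sqrt_sq h0).symm
      _ ≤ Real.sqrt ((((n:ℝ)+4) * h n)^2) := Real.sqrt_le_sqrt hineq
      _ = ((n:ℝ)+4) * h n := Real.sqrt_sq (by positivity)
  refine ⟨C, hCpos, ?_⟩
  intro n
  induction n with
  | zero => exact hbase 0 (Nat.zero_le N)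
  | succ n ih =>
    rcases le_or_gt (n+1) N with hle | hgt
    · exact hbase (n+1) hle
    · have hnN : (N:ℝ) ≤ (n:ℝ) := by exact_mod_cast Nat.le_of_lt_succ (by omega)
      have hA : 12 ≤ (2-q) * ((n:ℝ)+1) := by
        rw [div_le_iff₀ h2q] at hNval
        nlinarith
      have hB : 24 ≤ (2-q) * C := by
        have : 24/(2-q) ≤ C := by rw [hC]; nlinarith [le_max_left (24/(2-q)) D]
        rw [div_le_iff₀ h2q] at this
        linarith
      have hrec : ‖Sfun ω (n+1)‖ ≤ q * ‖Sfun ω n‖ + (aa n 0 : ℝ) := by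
        rw [Sfun_rec ω hω0 n]
        calc ‖(ω + ω⁻¹) * Sfun ω n - ω⁻¹ * (aa n 0 : ℂ)‖
            = ‖(ω + ω⁻¹) * Sfun ω n - ω⁻¹ * (aa n 0 : ℂ)‖ := rfl
          _ ≤ ‖(ω + ω⁻¹) * Sfun ω n‖ + ‖ω⁻¹ * (aa n 0 : ℂ)‖ := norm_sub_le _ _
          _ = q * ‖Sfun ω n‖ + (aa n 0 : ℝ) := by
              rw [norm_mul, norm_mul, norm_inv,
                hω1, Complex.norm_natCast]
              ring
      have haa : (aa n 0 : ℝ) ≤ 3 * 2^n / h n := aa_n0_real n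
      have hSn : ‖Sfun ω n‖ ≤ C * 2^n / h n := by
        rw [le_div_iff₀ (hpos n)]; linarith [ih]
      have h2n : (0:ℝ) < 2^n := by positivity
      have l1 : ‖Sfun ω (n+1)‖ ≤ q * (C * 2^n / h n) + 3 * 2^n / h n := by
        have := mul_le_mul_of_nonneg_left hSn hq0
        linarith
      have key : ((n:ℝ)+1) * (‖Sfun ω (n+1)‖ * h (n+1)) * h n
          ≤ (((n:ℝ)+4) * (q * C + 3) * 2^n) * h n := by
        have habs0 : 0 ≤ ‖Sfun ω (n+1)‖ := norm_nonneg _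
        have step : ((n:ℝ)+1) * (‖Sfun ω (n+1)‖ * h (n+1)) * h n
            ≤ (((n:ℝ)+4) * h n) * (q * (C * 2^n / h n) + 3 * 2^n / h n) * h n := by
          apply mul_le_mul_of_nonneg_right _ (hpos n).le
          calc ((n:ℝ)+1) * (‖Sfun ω (n+1)‖ * h (n+1))
              = (((n:ℝ)+1) * h (n+1)) * ‖Sfun ω (n+1)‖ := by ring
            _ ≤ (((n:ℝ)+4) * h n) * (q * (C * 2^n / h n) + 3 * 2^n / h n) :=
                mul_le_mul (hratio n) l1 habs0 (by positivity)
        refine step.trans (le_of_eq ?_)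
        field_simp
      have key2 : ((n:ℝ)+1) * (‖Sfun ω (n+1)‖ * h (n+1))
          ≤ ((n:ℝ)+4) * (q * C + 3) * 2^n :=
        le_of_mul_le_mul_right key (hpos n)
      have e1 : (2-q)*((n:ℝ)+1) - 3*q ≥ (2-q)*((n:ℝ)+1)/2 := by nlinarith
      have t1 : C * ((2-q)*((n:ℝ)+1)/2) ≤ C * ((2-q)*((n:ℝ)+1) - 3*q) :=
        mul_le_mul_of_nonneg_left e1 hCpos.le
      have e2 : 12*((n:ℝ)+1) ≤ C * ((2-q)*((n:ℝ)+1)/2) := by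
        have := mul_le_mul_of_nonneg_right hB (show (0:ℝ) ≤ ((n:ℝ)+1)/2 by positivity)
        nlinarith
      have final : ((n:ℝ)+4) * (q * C + 3) ≤ 2 * C * ((n:ℝ)+1) := by
        nlinarith [t1, e2, (show (0:ℝ) ≤ (n:ℝ) by positivity)]
      have final2 : ((n:ℝ)+4) * (q * C + 3) * 2^n ≤ 2 * C * ((n:ℝ)+1) * 2^n :=
        mul_le_mul_of_nonneg_right final h2n.le
      have hn1pos : (0:ℝ) < (n:ℝ)+1 := by positivity
      have goal2 : ((n:ℝ)+1) * (‖Sfun ω (n+1)‖ * h (n+1))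
          ≤ ((n:ℝ)+1) * (C * 2^(n+1)) := by
        calc ((n:ℝ)+1) * (‖Sfun ω (n+1)‖ * h (n+1))
            ≤ 2 * C * ((n:ℝ)+1) * 2^n := key2.trans final2
          _ = ((n:ℝ)+1) * (C * 2^(n+1)) := by ring
      exact le_of_mul_le_mul_left goal2 hn1pos


/-- Uniform bound at roots of unity other than `±1`: for `ℓ ≥ 3`, `1 ≤ j ≤ ℓ−1`,
`ω = exp(2πij/ℓ) ≠ −1`, there is `C > 0` with
`|Σ_{m=0}^n a(n,m)·ωᵐ| ≤ C·n^{-3/2}·2ⁿ` for all `n ≥ 1`. -/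
theorem stmt19 (ℓ : ℕ) (hℓ : 3 ≤ ℓ) (j : ℕ) (hj1 : 1 ≤ j) (hjℓ : j ≤ ℓ - 1)
    (ω : ℂ) (hω : ω = Complex.exp (2 * Real.pi * Complex.I * j / ℓ)) (hω1 : ω ≠ -1) :
    ∃ C : ℝ, 0 < C ∧ ∀ n : ℕ, 1 ≤ n →
      ‖∑ m ∈ Finset.range (n+1), (aa n m : ℂ) * ω ^ m‖
        ≤ C * (n : ℝ) ^ (-(3 : ℝ)/2) * 2 ^ n := by
  have hℓ0 : (ℓ:ℂ) ≠ 0 := by exact_mod_cast (by omega : ℓ ≠ 0)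
  have harg : 2 * Real.pi * Complex.I * j / ℓ = ((2 * Real.pi * j / ℓ : ℝ) : ℂ) * Complex.I := by
    push_cast
    field_simp
  have hu : ‖ω‖ = 1 := by
    rw [hω, harg, Complex.norm_exp_ofReal_mul_I]
  have hωne1 : ω ≠ 1 := by
    rw [hω]
    intro hcon
    rw [Complex.exp_eq_one_iff] at hcon
    obtain ⟨k, hk⟩ := hcon
    have hπ : ((Real.pi : ℝ) : ℂ) ≠ 0 := Complex.ofReal_ne_zero.mpr Real.pi_ne_zero
    have hI : Complex.I ≠ 0 := Complex.I_ne_zero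
    have hjk : (j : ℂ) = k * ℓ := by
      field_simp at hk
      have h2 : (2:ℂ) * Real.pi * Complex.I ≠ 0 := by simp [hπ, hI]
      apply mul_left_cancel₀ h2
      rw [hk]; ring
    have hjk' : (j : ℤ) = k * ℓ := by exact_mod_cast hjk
    have hj2 : (1:ℤ) ≤ j := by exact_mod_cast hj1
    have hj3 : (j:ℤ) ≤ (ℓ:ℤ) - 1 := by
      have : j ≤ ℓ - 1 := hjℓ
      omega
    have hl3 : (3:ℤ) ≤ ℓ := by exact_mod_cast hℓ
    rcases le_or_gt k 0 with hk0 | hk0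
    · nlinarith
    · nlinarith
  have hω0 : ω ≠ 0 := by
    intro hcon; rw [hcon] at hu; simp at hu
  have hinv : ω⁻¹ = starRingEnd ℂ ω := Complex.inv_eq_conj hu
  have hre : |ω.re| < 1 := by
    have h1 : ω.re^2 + ω.im^2 = 1 := by
      have h := Complex.sq_norm ω
      rw [hu, Complex.normSq_apply] at h
      nlinarith [h]
    rcases lt_or_ge (|ω.re|) 1 with h | h
    · exact h
    · exfalso
      have h2 : |ω.re| ≤ 1 := by
        have := Complex.abs_re_le_norm ω
        rwa [hu] at this
      have h3 : |ω.re| = 1 := le_antisymm h2 h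
      have h4 : ω.re = 1 ∨ ω.re = -1 := abs_eq (by norm_num : (0:ℝ) ≤ 1) |>.mp h3
      have him : ω.im = 0 := by
        have : ω.re^2 = 1 := by rcases h4 with h|h <;> rw [h] <;> ring
        nlinarith [sq_nonneg ω.im]
      rcases h4 with h5 | h5
      · exact hωne1 (by apply Complex.ext <;> simp [h5, him])
      · exact hω1 (by apply Complex.ext <;> simp [h5, him])
  have hq2 : ‖ω + ω⁻¹‖ < 2 := by
    rw [hinv, Complex.add_conj]
    rw [show ((2 * ω.re : ℝ) : ℂ) = ((2:ℝ) * ω.re : ℝ) by norm_num]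
    rw [Complex.norm_real, Real.norm_eq_abs, abs_mul]
    rw [abs_of_pos (by norm_num : (0:ℝ) < 2)]
    linarith
  obtain ⟨C, hC, hbound⟩ := master ω hu hq2
  refine ⟨C, hC, ?_⟩
  intro n hn
  have hb := hbound n
  have hpos : (0:ℝ) < Real.sqrt ((n+1:ℝ)^3) := Real.sqrt_pos.mpr (by positivity)
  have hn1 : (1:ℝ) ≤ (n:ℝ) := by exact_mod_cast hn
  have hpos2 : (0:ℝ) < Real.sqrt ((n:ℝ)^3) := Real.sqrt_pos.mpr (by positivity)
  have hrw : (n : ℝ) ^ (-(3 : ℝ)/2) = (Real.sqrt ((n:ℝ)^3))⁻¹ := by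
    rw [show (-(3:ℝ)/2) = -((3:ℝ)/2) by ring, Real.rpow_neg (by positivity)]
    congr 1
    rw [Real.sqrt_eq_rpow, ← Real.rpow_natCast (n:ℝ) 3, ← Real.rpow_mul (by positivity)]
    norm_num
  have hmono : Real.sqrt ((n:ℝ)^3) ≤ Real.sqrt ((n+1:ℝ)^3) := by
    apply Real.sqrt_le_sqrt
    nlinarith
  have hS : ‖Sfun ω n‖ ≤ C * 2^n / Real.sqrt ((n+1:ℝ)^3) := by
    rw [le_div_iff₀ hpos]
    exact hb
  have hfinal : C * 2^n / Real.sqrt ((n+1:ℝ)^3) ≤ C * (n : ℝ) ^ (-(3 : ℝ)/2) * 2 ^ n := by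
    rw [hrw]
    rw [div_le_iff₀ hpos]
    have expand : C * (Real.sqrt ((n:ℝ)^3))⁻¹ * 2^n * Real.sqrt ((n+1:ℝ)^3)
        = C * 2^n * (Real.sqrt ((n+1:ℝ)^3) / Real.sqrt ((n:ℝ)^3)) := by
      field_simp
    rw [expand]
    have h1le : (1:ℝ) ≤ Real.sqrt ((n+1:ℝ)^3) / Real.sqrt ((n:ℝ)^3) :=
      (one_le_div hpos2).mpr hmono
    nlinarith [mul_pos hC (show (0:ℝ) < 2^n by positivity)]
  show ‖Sfun ω n‖ ≤ _
  exact hS.trans hfinal
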